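/- Let {v₁,…,v_{N+1}} be an obtuse system in ℂ^N with associated probabilities pᵢ = 1/(1+‖vᵢ‖²), and let {w₁,…,w_{N+1}} be a family of vectors in ℂ^N. Then {wᵢ} is an obtuse system with the same associated probabilities pᵢ if and only if there exists a unitary operator U on ℂ^N with wᵢ = U vᵢ for all i. -/

import Mathlib

open Finset

local notation "E" => EuclideanSpace ℂ (Fin _)

/-- If two families have equal Gram matrices, all linear combinations have equal norms. -/
lemma gram_norm_eq {n : ℕ} (v w : Fin n → EuclideanSpace ℂ (Fin n.pred))
    (hg : ∀ i j, (inner ℂ (w i) (w j) : ℂ) = inner ℂ (v i) (v j)) (c : Fin n → ℂ) :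
    ‖∑ i, c i • w i‖ = ‖∑ i, c i • v i‖ := by
  have key : (inner ℂ (∑ i, c i • w i) (∑ i, c i • w i) : ℂ)
      = inner ℂ (∑ i, c i • v i) (∑ i, c i • v i) := by
    rw [sum_inner, sum_inner]
    refine Finset.sum_congr rfl fun i _ => ?_
    rw [inner_sum, inner_sum]
    refine Finset.sum_congr rfl fun j _ => ?_
    rw [inner_smul_left, inner_smul_left, inner_smul_right, inner_smul_right, hg]
  rw [@norm_eq_sqrt_re_inner ℂ, @norm_eq_sqrt_re_inner ℂ, key]

/-- a family `w` is an obtuse system with the same associated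
probabilities `pᵢ = 1/(1+‖vᵢ‖²)` as the obtuse system `v` if and only if
`wᵢ = U vᵢ` for some unitary `U` of `ℂ^N`. -/
theorem stmt12 {N : ℕ} (v w : Fin (N + 1) → EuclideanSpace ℂ (Fin N))
    (hv : ∀ i j, i ≠ j → (inner ℂ (v i) (v j) : ℂ) = -1) :
    ((∀ i j, i ≠ j → (inner ℂ (w i) (w j) : ℂ) = -1) ∧
      ∀ i, (1 / (1 + ‖w i‖ ^ 2) : ℝ) = 1 / (1 + ‖v i‖ ^ 2)) ↔
    ∃ U : EuclideanSpace ℂ (Fin N) ≃ₗᵢ[ℂ] EuclideanSpace ℂ (Fin N),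
      ∀ i, w i = U (v i) := by
  constructor
  · rintro ⟨hw, hp⟩
    -- norms agree
    have hn : ∀ i, ‖w i‖ ^ 2 = ‖v i‖ ^ 2 := by
      intro i
      have h := hp i
      have h1 : (0:ℝ) < 1 + ‖w i‖ ^ 2 := by positivity
      have h2 : (0:ℝ) < 1 + ‖v i‖ ^ 2 := by positivity
      rw [div_eq_div_iff h1.ne' h2.ne'] at h
      linarith
    -- Gram matrices agree
    have hg : ∀ i j, (inner ℂ (w i) (w j) : ℂ) = inner ℂ (v i) (v j) := by
      intro i j
      rcases eq_or_ne i j with rfl | hij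
      · rw [inner_self_eq_norm_sq_to_K, inner_self_eq_norm_sq_to_K]
        exact_mod_cast hn i
      · rw [hw i j hij, hv i j hij]
    -- the two linear-combination maps
    set Tv : (Fin (N+1) → ℂ) →ₗ[ℂ] EuclideanSpace ℂ (Fin N) :=
      Fintype.linearCombination ℂ v with hTv
    set Tw : (Fin (N+1) → ℂ) →ₗ[ℂ] EuclideanSpace ℂ (Fin N) :=
      Fintype.linearCombination ℂ w with hTw
    have hTva : ∀ c, Tv c = ∑ i, c i • v i := fun c => rfl
    have hTwa : ∀ c, Tw c = ∑ i, c i • w i := fun c => rfl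
    have hnorm : ∀ c, ‖Tw c‖ = ‖Tv c‖ := by
      intro c
      rw [hTva, hTwa]
      exact gram_norm_eq (n := N+1) v w hg c
    -- kernels agree
    have hker : LinearMap.ker Tv = LinearMap.ker Tw := by
      ext c
      simp only [LinearMap.mem_ker]
      constructor <;> intro h
      · have := hnorm c
        rw [h, norm_zero] at this
        exact norm_eq_zero.mp this
      · have := hnorm c
        rw [h, norm_zero] at this
        exact norm_eq_zero.mp this.symm
    -- kernel of Tv is at most one-dimensional
    have hd : ∀ j, (1 + (RCLike.ofReal ‖v j‖ : ℂ) ^ 2) ≠ 0 := by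
      intro j hcon
      norm_cast at hcon
      have hcon' : (1:ℂ) + Complex.ofReal (‖v j‖ ^ 2) = 0 := hcon
      have h2 : (1 + ‖v j‖ ^ 2 : ℝ) = 0 := by exact_mod_cast hcon'
      nlinarith [sq_nonneg ‖v j‖]
    set d : Fin (N+1) → ℂ := fun j => (1 + (RCLike.ofReal ‖v j‖ : ℂ) ^ 2)⁻¹ with hdd
    have hdne : d ≠ 0 := by
      intro hcon
      have := congrFun hcon 0
      simp only [hdd, Pi.zero_apply, inv_eq_zero] at this
      exact hd 0 this
    have hker_le : LinearMap.ker Tv ≤ Submodule.span ℂ {d} := by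
      intro c hc
      rw [LinearMap.mem_ker] at hc
      have hcj : ∀ j, c j = (∑ i, c i) * d j := by
        intro j
        have h0 : (inner ℂ (v j) (Tv c) : ℂ) = 0 := by rw [hc, inner_zero_right]
        rw [hTva, inner_sum] at h0
        simp only [inner_smul_right] at h0
        rw [← Finset.add_sum_erase _ _ (mem_univ j)] at h0
        have herase : ∑ i ∈ univ.erase j, c i * (inner ℂ (v j) (v i) : ℂ)
            = ∑ i ∈ univ.erase j, (-(c i)) := by
          refine Finset.sum_congr rfl fun i hi => ?_
          rw [hv j i (Ne.symm (Finset.ne_of_mem_erase hi))]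
          ring
        have hsum : ∑ i ∈ univ.erase j, (-(c i)) = -(∑ i, c i) + c j := by
          rw [Finset.sum_neg_distrib, Finset.sum_erase_eq_sub (mem_univ j)]
          ring
        rw [herase, hsum, inner_self_eq_norm_sq_to_K] at h0
        have hkey : c j * (1 + (RCLike.ofReal ‖v j‖ : ℂ)^2) = ∑ i, c i := by
          linear_combination h0
        rw [hdd]
        rw [← div_eq_mul_inv, eq_div_iff (hd j)]
        exact hkey
      have : c = (∑ i, c i) • d := by
        ext j; simpa using hcj j
      rw [this]
      exact Submodule.smul_mem _ _ (Submodule.mem_span_singleton_self d)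
    have hker_fr : Module.finrank ℂ (LinearMap.ker Tv) ≤ 1 := by
      calc Module.finrank ℂ (LinearMap.ker Tv)
          ≤ Module.finrank ℂ (Submodule.span ℂ {d}) := Submodule.finrank_mono hker_le
        _ = 1 := finrank_span_singleton hdne
    have hfrE : Module.finrank ℂ (EuclideanSpace ℂ (Fin N)) = N := finrank_euclideanSpace_fin
    have hfrdom : Module.finrank ℂ (Fin (N+1) → ℂ) = N + 1 := by
      simp [Module.finrank_pi]
    -- Tv is surjective
    have hrank := LinearMap.finrank_range_add_finrank_ker Tv
    rw [hfrdom] at hrank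
    have hrange_le : Module.finrank ℂ (LinearMap.range Tv) ≤ N := by
      have h := Submodule.finrank_le (LinearMap.range Tv)
      rwa [hfrE] at h
    have hrangeN : Module.finrank ℂ (LinearMap.range Tv) = N := by omega
    have hTv_surj : Function.Surjective Tv := by
      rw [← LinearMap.range_eq_top]
      exact Submodule.eq_top_of_finrank_eq (by rw [hrangeN, hfrE])
    -- Tw is surjective
    have hrankw := LinearMap.finrank_range_add_finrank_ker Tw
    rw [hfrdom, ← hker] at hrankw
    have hTw_surj : Function.Surjective Tw := by
      rw [← LinearMap.range_eq_top]
      refine Submodule.eq_top_of_finrank_eq ?_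
      rw [hfrE]; omega
    -- build the unitary
    let ev : ((Fin (N+1) → ℂ) ⧸ LinearMap.ker Tv) ≃ₗ[ℂ] EuclideanSpace ℂ (Fin N) :=
      Tv.quotKerEquivOfSurjective hTv_surj
    let ew : ((Fin (N+1) → ℂ) ⧸ LinearMap.ker Tw) ≃ₗ[ℂ] EuclideanSpace ℂ (Fin N) :=
      Tw.quotKerEquivOfSurjective hTw_surj
    let q : ((Fin (N+1) → ℂ) ⧸ LinearMap.ker Tv) ≃ₗ[ℂ]
        ((Fin (N+1) → ℂ) ⧸ LinearMap.ker Tw) := Submodule.quotEquivOfEq _ _ hker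
    let U₀ : EuclideanSpace ℂ (Fin N) ≃ₗ[ℂ] EuclideanSpace ℂ (Fin N) :=
      ev.symm ≪≫ₗ q ≪≫ₗ ew
    have hev : ∀ c, ev (Submodule.Quotient.mk c) = Tv c := by
      intro c
      simp [ev, LinearMap.quotKerEquivOfSurjective, LinearMap.quotKerEquivRange_apply_mk]
    have hew : ∀ c, ew (Submodule.Quotient.mk c) = Tw c := by
      intro c
      simp [ew, LinearMap.quotKerEquivOfSurjective, LinearMap.quotKerEquivRange_apply_mk]
    have hU₀ : ∀ c, U₀ (Tv c) = Tw c := by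
      intro c
      have h1 : ev.symm (Tv c) = Submodule.Quotient.mk c := by
        rw [← hev c, LinearEquiv.symm_apply_apply]
      simp only [U₀, LinearEquiv.trans_apply, h1]
      rw [Submodule.quotEquivOfEq_mk, hew]
    have hU₀norm : ∀ x, ‖U₀ x‖ = ‖x‖ := by
      intro x
      obtain ⟨c, rfl⟩ := hTv_surj x
      rw [hU₀ c, hnorm]
    refine ⟨⟨U₀, hU₀norm⟩, fun i => ?_⟩
    have h1 : Tv (Pi.single i 1) = v i := by
      rw [hTva]
      classical
      simp [Pi.single_apply, Finset.sum_ite_eq']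
    have h2 : Tw (Pi.single i 1) = w i := by
      rw [hTwa]
      classical
      simp [Pi.single_apply, Finset.sum_ite_eq']
    show w i = U₀ (v i)
    rw [← h1, hU₀, h2]
  · rintro ⟨U, hU⟩
    constructor
    · intro i j hij
      rw [hU i, hU j, LinearIsometryEquiv.inner_map_map]
      exact hv i j hij
    · intro i
      rw [hU i, U.norm_map]
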